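/- If T is a finite tree on at least 3 vertices whose adjacency matrix has |V(T)| distinct eigenvalues, then T has a leaf adjacent to a vertex of degree two; that is, there exist adjacent vertices u and v with deg(u) = 1 and deg(v) = 2. -/
import Mathlib


open scoped Matrix

lemma aux_no_two_kernel {V : Type*} [Fintype V] [DecidableEq V]
    (A : Matrix V V ℝ)
    (θ : Fin (Fintype.card V) → ℝ) (hθ : Function.Injective θ)
    (E : Fin (Fintype.card V) → Matrix V V ℝ)
    (horth : ∀ r s, E r * E s = if r = s then E r else 0)
    (hne : ∀ r, E r ≠ 0)
    (hsum : ∑ r, E r = 1)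
    (hdecomp : A = ∑ r, θ r • E r)
    (x1 x2 : V → ℝ) (h1 : A *ᵥ x1 = 0) (h2 : A *ᵥ x2 = 0)
    (hli : LinearIndependent ℝ ![x1, x2]) : False := by
  have key : ∀ (r : Fin (Fintype.card V)) (x : V → ℝ), A *ᵥ x = 0 →
      θ r • (E r *ᵥ x) = 0 := by
    intro r x hx
    have hEA : E r * A = θ r • E r := by
      rw [hdecomp, Matrix.mul_sum]
      simp_rw [Matrix.mul_smul, horth, smul_ite, smul_zero]
      simp
    calc θ r • (E r *ᵥ x) = (θ r • E r) *ᵥ x := by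
          rw [Matrix.smul_mulVec]
      _ = E r *ᵥ (A *ᵥ x) := by rw [← hEA, ← Matrix.mulVec_mulVec]
      _ = 0 := by rw [hx, Matrix.mulVec_zero]
  have hxsum : ∀ x : V → ℝ, ∑ r, E r *ᵥ x = x := by
    intro x
    have h' : (∑ r, E r) *ᵥ x = ∑ r, E r *ᵥ x := by
      ext i
      simp [Matrix.mulVec, dotProduct, Matrix.sum_apply, Finset.sum_mul]
      rw [Finset.sum_comm]
    rw [← h', hsum, Matrix.one_mulVec]
  have hx1ne : x1 ≠ 0 := by
    have := hli.ne_zero 0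
    simpa using this
  by_cases hz : ∃ r0, θ r0 = 0
  · obtain ⟨r0, hr0⟩ := hz
    have hEker : ∀ s, s ≠ r0 → (E s *ᵥ x1 = 0 ∧ E s *ᵥ x2 = 0) := by
      intro s hs
      have hθs : θ s ≠ 0 := by
        rw [← hr0]
        exact fun h => hs (hθ h)
      exact ⟨(smul_eq_zero.mp (key s x1 h1)).resolve_left hθs,
             (smul_eq_zero.mp (key s x2 h2)).resolve_left hθs⟩
    have hcol : ∀ r, ∃ y : V → ℝ, y ≠ 0 ∧ E r *ᵥ y = y ∧ ∀ s, s ≠ r → E s *ᵥ y = 0 := by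
      intro r
      have hex : ∃ i j, E r i j ≠ 0 := by
        by_contra hc
        push_neg at hc
        exact hne r (by ext i j; exact hc i j)
      obtain ⟨i, j, hij⟩ := hex
      refine ⟨E r *ᵥ Pi.single j 1, ?_, ?_, ?_⟩
      · intro h
        apply hij
        have := congrFun h i
        simpa using this
      · rw [Matrix.mulVec_mulVec, horth r r, if_pos rfl]
      · intro s hs
        rw [Matrix.mulVec_mulVec, horth s r, if_neg hs, Matrix.zero_mulVec]
    choose y hy0 hyfix hyother using hcol
    have hgli : LinearIndependent ℝ
        (Sum.elim ![x1, x2] (fun r : {r : Fin (Fintype.card V) // r ≠ r0} => y r.1)) := by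
      rw [Fintype.linearIndependent_iff]
      intro c hc
      have hczero : ∀ (s : {r : Fin (Fintype.card V) // r ≠ r0}), c (Sum.inr s) = 0 := by
        intro s
        have h0 : E s.1 *ᵥ (∑ i, c i • Sum.elim ![x1, x2]
            (fun r : {r : Fin (Fintype.card V) // r ≠ r0} => y r.1) i) = 0 := by
          rw [hc, Matrix.mulVec_zero]
        rw [← Matrix.mulVecLin_apply, map_sum] at h0
        simp_rw [map_smul, Matrix.mulVecLin_apply] at h0
        rw [Fintype.sum_sum_type] at h0
        have hl : ∑ i : Fin 2, c (Sum.inl i) •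
            (E s.1 *ᵥ Sum.elim ![x1, x2]
              (fun r : {r : Fin (Fintype.card V) // r ≠ r0} => y r.1) (Sum.inl i)) = 0 := by
          rw [Fin.sum_univ_two]
          simp only [Sum.elim_inl, Matrix.cons_val_zero, Matrix.cons_val_one, Matrix.head_cons]
          rw [(hEker s.1 s.2).1, (hEker s.1 s.2).2, smul_zero, smul_zero, add_zero]
        have hr : ∑ t : {r : Fin (Fintype.card V) // r ≠ r0}, c (Sum.inr t) •
            (E s.1 *ᵥ Sum.elim ![x1, x2]
              (fun r : {r : Fin (Fintype.card V) // r ≠ r0} => y r.1) (Sum.inr t)) =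
            c (Sum.inr s) • y s.1 := by
          rw [Finset.sum_eq_single s]
          · simp only [Sum.elim_inr]
            rw [hyfix s.1]
          · intro t _ hts
            simp only [Sum.elim_inr]
            rw [hyother t.1 s.1 (fun h => hts (Subtype.ext h.symm)), smul_zero]
          · intro h
            exact absurd (Finset.mem_univ s) h
        rw [hl, hr, zero_add] at h0
        exact (smul_eq_zero.mp h0).resolve_right (hy0 s.1)
      have hc2 : ∑ i : Fin 2, c (Sum.inl i) • (![x1, x2] i) = 0 := by
        rw [Fintype.sum_sum_type] at hc
        simp only [Sum.elim_inr, hczero, zero_smul, Finset.sum_const_zero, add_zero] at hc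
        simpa using hc
      have hfin := Fintype.linearIndependent_iff.mp hli (fun i => c (Sum.inl i)) hc2
      intro i
      rcases i with i | s
      · exact hfin i
      · exact hczero s
    have hcard := hgli.fintype_card_le_finrank
    rw [Module.finrank_fintype_fun_eq_card] at hcard
    have hns : Fintype.card {r : Fin (Fintype.card V) // r ≠ r0} = Fintype.card V - 1 := by
      rw [Fintype.card_subtype_compl, Fintype.card_subtype_eq, Fintype.card_fin]
    rw [Fintype.card_sum, Fintype.card_fin, hns] at hcard
    have hn1 : 1 ≤ Fintype.card V := r0.pos
    omega
  · push_neg at hz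
    apply hx1ne
    rw [← hxsum x1]
    apply Finset.sum_eq_zero
    intro r _
    exact (smul_eq_zero.mp (key r x1 h1)).resolve_left (hz r)

lemma aux_li {V : Type*} [DecidableEq V] {a b c d : V}
    (hab : a ≠ b) (hac : a ≠ c) (had : a ≠ d) (hcd : c ≠ d) :
    LinearIndependent ℝ
      ![(Pi.single a (1 : ℝ) - Pi.single b 1 : V → ℝ),
        (Pi.single c (1 : ℝ) - Pi.single d 1 : V → ℝ)] := by
  rw [LinearIndependent.pair_iff]
  intro s t hst
  have ha := congrFun hst a
  simp [Pi.single_apply, hab, hac, had] at ha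
  have hc := congrFun hst c
  simp [Pi.single_apply, ha, hcd] at hc
  exact ⟨ha, hc⟩

lemma aux_kernel {V : Type*} [Fintype V] [DecidableEq V]
    (T : SimpleGraph V) [DecidableRel T.Adj] (a b v : V)
    (hA : T.neighborFinset a = {v}) (hB : T.neighborFinset b = {v}) :
    T.adjMatrix ℝ *ᵥ (Pi.single a (1 : ℝ) - Pi.single b 1) = 0 := by
  ext u
  have h1 : a ∈ T.neighborFinset u ↔ u = v := by
    rw [SimpleGraph.mem_neighborFinset, SimpleGraph.adj_comm,
      ← SimpleGraph.mem_neighborFinset, hA, Finset.mem_singleton]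
  have h2 : b ∈ T.neighborFinset u ↔ u = v := by
    rw [SimpleGraph.mem_neighborFinset, SimpleGraph.adj_comm,
      ← SimpleGraph.mem_neighborFinset, hB, Finset.mem_singleton]
  simp only [Matrix.mulVec_sub, Pi.sub_apply, Pi.zero_apply,
    SimpleGraph.adjMatrix_mulVec_apply]
  rw [Finset.sum_sub_distrib, Finset.sum_pi_single', Finset.sum_pi_single']
  simp only [h1, h2]
  rw [sub_self]

/-- A tree on at least `3` vertices with simple eigenvalues has a leaf
adjacent to a vertex of degree two. -/
theorem tree_simple_eigenvalues_leaf_adj_degree_two {V : Type*} [Fintype V] [DecidableEq V]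
    (T : SimpleGraph V) [DecidableRel T.Adj] (hT : T.IsTree)
    (hcard : 3 ≤ Fintype.card V)
    (θ : Fin (Fintype.card V) → ℝ) (hθ : Function.Injective θ)
    (E : Fin (Fintype.card V) → Matrix V V ℝ)
    (hsymm : ∀ r, (E r).IsSymm)
    (horth : ∀ r s, E r * E s = if r = s then E r else 0)
    (hne : ∀ r, E r ≠ 0)
    (hsum : ∑ r, E r = 1)
    (hdecomp : T.adjMatrix ℝ = ∑ r, θ r • E r) :
    ∃ u v : V, T.Adj u v ∧ T.degree u = 1 ∧ T.degree v = 2 := by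
  by_contra hcon
  push_neg at hcon
  have hconn := hT.isConnected
  -- every vertex has a neighbour
  have hdegpos : ∀ v : V, 0 < T.degree v := by
    intro v
    rw [SimpleGraph.degree_pos_iff_exists_adj]
    obtain ⟨w, hw⟩ := Fintype.exists_ne_of_one_lt_card (by omega) v
    obtain ⟨p⟩ := hconn.preconnected v w
    cases p with
    | nil => exact absurd rfl hw
    | cons h q => exact ⟨_, h⟩
  have hne' : ∀ v : V, (T.neighborFinset v).Nonempty :=
    fun v => Finset.card_pos.mp (hdegpos v)
  set f : V → V := fun v => (hne' v).choose with hf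
  have hfmem : ∀ v, f v ∈ T.neighborFinset v := fun v => (hne' v).choose_spec
  have hfadj : ∀ v, T.Adj v (f v) :=
    fun v => (T.mem_neighborFinset v (f v)).mp (hfmem v)
  have hleafnb : ∀ x : V, T.degree x = 1 → T.neighborFinset x = {f x} := by
    intro x hx
    obtain ⟨a, ha⟩ := Finset.card_eq_one.mp hx
    have hm : f x ∈ T.neighborFinset x := hfmem x
    rw [ha] at hm ⊢
    rw [Finset.mem_singleton.mp hm]
  -- no two adjacent leaves
  have hnoll : ∀ u v : V, T.Adj u v → T.degree u = 1 → T.degree v = 1 → False := by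
    intro u v huv hu hv
    have hNu : T.neighborFinset u = {v} := by
      have hm : v ∈ T.neighborFinset u := (T.mem_neighborFinset u v).mpr huv
      obtain ⟨a, ha⟩ := Finset.card_eq_one.mp hu
      rw [ha] at hm ⊢
      rw [Finset.mem_singleton.mp hm]
    have hNv : T.neighborFinset v = {u} := by
      have hm : u ∈ T.neighborFinset v := (T.mem_neighborFinset v u).mpr huv.symm
      obtain ⟨a, ha⟩ := Finset.card_eq_one.mp hv
      rw [ha] at hm ⊢
      rw [Finset.mem_singleton.mp hm]
    have claim : ∀ (x z : V) (p : T.Walk x z), (x = u ∨ x = v) → (z = u ∨ z = v) := by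
      intro x z p
      induction p with
      | nil => exact id
      | cons h q ih =>
        intro hx
        apply ih
        rcases hx with rfl | rfl
        · right
          have hb := (T.mem_neighborFinset _ _).mpr h
          rw [hNu] at hb
          exact Finset.mem_singleton.mp hb
        · left
          have hb := (T.mem_neighborFinset _ _).mpr h
          rw [hNv] at hb
          exact Finset.mem_singleton.mp hb
    have hss : ({u, v} : Finset V) ⊂ Finset.univ := by
      rw [Finset.ssubset_univ_iff]
      intro hEq
      have : Fintype.card V = ({u, v} : Finset V).card := by
        rw [hEq, Finset.card_univ]
      have h2 : ({u, v} : Finset V).card ≤ 2 :=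
        (Finset.card_insert_le u {v}).trans (by simp)
      omega
    obtain ⟨w, _, hw⟩ := Finset.exists_of_ssubset hss
    obtain ⟨p⟩ := hconn.preconnected u w
    have := claim u w p (Or.inl rfl)
    apply hw
    rcases this with rfl | rfl <;> simp
  set leaves := Finset.univ.filter (fun x => T.degree x = 1) with hleaves
  set B := leaves.image f with hBdef
  set fib := fun v => leaves.filter (fun x => f x = v) with hfib
  have hfibsum : leaves.card = ∑ v ∈ B, (fib v).card :=
    Finset.card_eq_sum_card_fiberwise (fun x hx => Finset.mem_image_of_mem f hx)
  have hmemleaves : ∀ x, x ∈ leaves ↔ T.degree x = 1 := by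
    intro x
    rw [hleaves, Finset.mem_filter]
    simp
  have hB3 : ∀ v ∈ B, 3 ≤ T.degree v := by
    intro v hv
    obtain ⟨x, hx, rfl⟩ := Finset.mem_image.mp hv
    have hxleaf : T.degree x = 1 := (hmemleaves x).mp hx
    have h1 : T.degree (f x) ≠ 1 := fun h => hnoll x (f x) (hfadj x) hxleaf h
    have h2 : T.degree (f x) ≠ 2 := hcon x (f x) (hfadj x) hxleaf
    have h0 := hdegpos (f x)
    omega
  -- degree sum identity
  have hedge : T.edgeFinset.card + 1 = Fintype.card V := hT.card_edgeFinset
  have hdegsum : ∑ v : V, T.degree v = 2 * T.edgeFinset.card :=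
    T.sum_degrees_eq_twice_card_edges
  have hdegsumZ : ∑ v : V, (T.degree v : ℤ) = 2 * (Fintype.card V : ℤ) - 2 := by
    have h' : (T.edgeFinset.card : ℤ) + 1 = (Fintype.card V : ℤ) := by exact_mod_cast hedge
    rw [← Nat.cast_sum, hdegsum]
    push_cast
    linarith
  -- lower bound on the number of leaves
  have key1 : (B.card : ℤ) + 2 ≤ (leaves.card : ℤ) := by
    have hsplit : ∑ v ∈ (Finset.univ \ leaves), ((T.degree v : ℤ) - 2)
        + ∑ v ∈ leaves, ((T.degree v : ℤ) - 2)
        = ∑ v : V, ((T.degree v : ℤ) - 2) :=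
      Finset.sum_sdiff (Finset.subset_univ leaves)
    have htot : ∑ v : V, ((T.degree v : ℤ) - 2) = -2 := by
      rw [Finset.sum_sub_distrib, hdegsumZ, Finset.sum_const, Finset.card_univ]
      push_cast
      ring
    have hleavessum : ∑ v ∈ leaves, ((T.degree v : ℤ) - 2) = -(leaves.card : ℤ) := by
      rw [Finset.sum_congr rfl (fun x hx => by
        rw [(hmemleaves x).mp hx]; norm_num : ∀ x ∈ leaves, ((T.degree x : ℤ) - 2) = -1)]
      rw [Finset.sum_const]
      push_cast
      ring
    have hBsub : B ⊆ Finset.univ \ leaves := by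
      intro v hv
      rw [Finset.mem_sdiff]
      refine ⟨Finset.mem_univ v, ?_⟩
      rw [hmemleaves v]
      have := hB3 v hv
      omega
    have hBsum : (B.card : ℤ) ≤ ∑ v ∈ (Finset.univ \ leaves), ((T.degree v : ℤ) - 2) := by
      have h1 : (B.card : ℤ) ≤ ∑ v ∈ B, ((T.degree v : ℤ) - 2) := by
        have := Finset.card_nsmul_le_sum B (fun v => (T.degree v : ℤ) - 2) 1
          (fun v hv => by
            show (1 : ℤ) ≤ (T.degree v : ℤ) - 2
            have := hB3 v hv
            omega)
        simpa using this
      refine h1.trans (Finset.sum_le_sum_of_subset_of_nonneg hBsub ?_)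
      intro v hvu hvB
      have hv1 : T.degree v ≠ 1 := by
        have := (Finset.mem_sdiff.mp hvu).2
        rw [hmemleaves v] at this
        exact this
      have := hdegpos v
      omega
    have := hsplit
    rw [htot, hleavessum] at this
    linarith
  -- now the case analysis
  by_cases hA : ∃ v, 3 ≤ (fib v).card
  · obtain ⟨v, hv3⟩ := hA
    obtain ⟨a, ha⟩ := Finset.card_pos.mp (by omega : 0 < (fib v).card)
    have h2 : 1 < ((fib v).erase a).card := by
      rw [Finset.card_erase_of_mem ha]
      omega
    obtain ⟨b, hb, c, hc, hbc⟩ := Finset.one_lt_card.mp h2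
    have hba := (Finset.mem_erase.mp hb).1
    have hca := (Finset.mem_erase.mp hc).1
    have hb' := (Finset.mem_erase.mp hb).2
    have hc' := (Finset.mem_erase.mp hc).2
    have hmem : ∀ x ∈ fib v, T.neighborFinset x = {v} := by
      intro x hx
      rw [hfib, Finset.mem_filter] at hx
      rw [hleafnb x ((hmemleaves x).mp hx.1), hx.2]
    exact aux_no_two_kernel (T.adjMatrix ℝ) θ hθ E horth hne hsum hdecomp
      (Pi.single a 1 - Pi.single b 1) (Pi.single b 1 - Pi.single c 1)
      (aux_kernel T a b v (hmem a ha) (hmem b hb'))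
      (aux_kernel T b c v (hmem b hb') (hmem c hc'))
      (aux_li (Ne.symm hba) (Ne.symm hba) (Ne.symm hca) hbc)
  by_cases hB2 : ∃ v w, v ≠ w ∧ 2 ≤ (fib v).card ∧ 2 ≤ (fib w).card
  · obtain ⟨v, w, hvw, hv2, hw2⟩ := hB2
    obtain ⟨a, ha, b, hb, hab⟩ := Finset.one_lt_card.mp (by omega : 1 < (fib v).card)
    obtain ⟨c, hc, d, hd, hcd⟩ := Finset.one_lt_card.mp (by omega : 1 < (fib w).card)
    have hfibmem : ∀ z x, x ∈ fib z → (T.neighborFinset x = {z} ∧ f x = z) := by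
      intro z x hx
      rw [hfib, Finset.mem_filter] at hx
      exact ⟨by rw [hleafnb x ((hmemleaves x).mp hx.1), hx.2], hx.2⟩
    have hac : a ≠ c := fun h => hvw (((hfibmem v a ha).2.symm.trans (by rw [h, (hfibmem w c hc).2])))
    have had : a ≠ d := fun h => hvw (((hfibmem v a ha).2.symm.trans (by rw [h, (hfibmem w d hd).2])))
    exact aux_no_two_kernel (T.adjMatrix ℝ) θ hθ E horth hne hsum hdecomp
      (Pi.single a 1 - Pi.single b 1) (Pi.single c 1 - Pi.single d 1)
      (aux_kernel T a b v (hfibmem v a ha).1 (hfibmem v b hb).1)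
      (aux_kernel T c d w (hfibmem w c hc).1 (hfibmem w d hd).1)
      (aux_li hab hac had hcd)
  -- the counting contradiction
  push_neg at hA hB2
  have hbound : ∑ v ∈ B, (fib v).card ≤ B.card + 1 := by
    by_cases hex : ∃ v0 ∈ B, 2 ≤ (fib v0).card
    · obtain ⟨v0, hv0B, hv02⟩ := hex
      rw [← Finset.add_sum_erase B _ hv0B]
      have h1 : ∑ w ∈ B.erase v0, (fib w).card ≤ (B.erase v0).card := by
        have := Finset.sum_le_card_nsmul (B.erase v0) (fun w => (fib w).card) 1
          (fun w hw => by
            show (fib w).card ≤ 1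
            have hwv0 := (Finset.mem_erase.mp hw).1
            have := hB2 v0 w (Ne.symm hwv0) hv02
            omega)
        simpa using this
      have h2 : (fib v0).card ≤ 2 := by have := hA v0; omega
      have h3 : (B.erase v0).card = B.card - 1 := Finset.card_erase_of_mem hv0B
      have h4 : 1 ≤ B.card := Finset.card_pos.mpr ⟨v0, hv0B⟩
      omega
    · push_neg at hex
      have := Finset.sum_le_card_nsmul B (fun w => (fib w).card) 1
        (fun w hw => by
          show (fib w).card ≤ 1
          have := hex w hw
          omega)
      simp at this
      omega
  have hNat : B.card + 2 ≤ leaves.card := by exact_mod_cast key1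
  rw [hfibsum] at hNat
  omega
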